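/- Let p > 0, γ > 0, and let g, h : [0,p] → ℝ be differentiable with g Lipschitz with constant κ, and h'(c) − p·g'(c) ≥ γ for all c. Fix ū ∈ ℝ and Δ ≥ 0. Suppose (c'', l'') satisfies c'' ∈ [0,p], l'' ≥ g(c''), h(c'') − p·l'' ≥ ū − Δ, and c'' + Δ/γ ≤ p. Then the point (c̃, l̃) with c̃ = c'' + Δ/γ and l̃ = g(c̃) satisfies c̃ ∈ [0,p], l̃ ≥ g(c̃), h(c̃) − p·l̃ ≥ ū, and |c̃ − c''| + |l̃ − g(c'')| ≤ (1 + κ)·Δ/γ. -/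
import Mathlib


theorem stmt_6 (p γ κ : ℝ) (hp : 0 < p) (hγ : 0 < γ)
    (g h g' h' : ℝ → ℝ)
    (hg : ∀ c ∈ Set.Icc 0 p, HasDerivAt g (g' c) c)
    (hh : ∀ c ∈ Set.Icc 0 p, HasDerivAt h (h' c) c)
    (hgLip : ∀ x ∈ Set.Icc 0 p, ∀ y ∈ Set.Icc 0 p, |g x - g y| ≤ κ * |x - y|)
    (hder : ∀ c ∈ Set.Icc 0 p, h' c - p * g' c ≥ γ)
    (ubar Δ : ℝ) (hΔ : 0 ≤ Δ)
    (c'' l'' : ℝ) (hc'' : c'' ∈ Set.Icc 0 p) (hl'' : l'' ≥ g c'')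
    (hfeas : h c'' - p * l'' ≥ ubar - Δ) (hroom : c'' + Δ / γ ≤ p) :
    c'' + Δ / γ ∈ Set.Icc 0 p ∧
      g (c'' + Δ / γ) ≥ g (c'' + Δ / γ) ∧
      h (c'' + Δ / γ) - p * g (c'' + Δ / γ) ≥ ubar ∧
      |(c'' + Δ / γ) - c''| + |g (c'' + Δ / γ) - g c''| ≤ (1 + κ) * Δ / γ := by
  have hdγ : 0 ≤ Δ / γ := div_nonneg hΔ hγ.le
  have hmem : c'' + Δ / γ ∈ Set.Icc 0 p :=
    ⟨by linarith [hc''.1], hroom⟩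
  set F : ℝ → ℝ := fun c => h c - p * g c with hF
  have hFd : ∀ c ∈ Set.Icc 0 p, HasDerivAt F (h' c - p * g' c) c := fun c hc =>
    ((hh c hc).sub ((hg c hc).const_mul p))
  have hconv : Convex ℝ (Set.Icc (0:ℝ) p) := convex_Icc 0 p
  have key : γ * ((c'' + Δ / γ) - c'') ≤ F (c'' + Δ / γ) - F c'' := by
    apply hconv.mul_sub_le_image_sub_of_le_deriv
      (fun c hc => (hFd c hc).continuousAt.continuousWithinAt)
      (fun c hc => ((hFd c (interior_subset hc)).differentiableAt).differentiableWithinAt)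
      (fun c hc => by
        rw [(hFd c (interior_subset hc)).deriv]
        exact hder c (interior_subset hc))
      c'' hc'' _ hmem (by linarith)
  have hγF : γ * ((c'' + Δ / γ) - c'') = Δ := by
    field_simp; ring
  rw [hγF] at key
  simp only [hF] at key
  refine ⟨hmem, le_refl _, ?_, ?_⟩
  · have hpg : p * g c'' ≤ p * l'' := by nlinarith
    linarith
  · have h1 : |(c'' + Δ / γ) - c''| = Δ / γ := by
      rw [abs_of_nonneg (by linarith)]; ring
    have h2 : |g (c'' + Δ / γ) - g c''| ≤ κ * (Δ / γ) := by
      have := hgLip _ hmem _ hc''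
      rwa [show (c'' + Δ / γ) - c'' = Δ / γ by ring, abs_of_nonneg hdγ] at this
    rw [h1, mul_div_assoc]
    calc Δ / γ + |g (c'' + Δ / γ) - g c''| ≤ Δ / γ + κ * (Δ / γ) := by linarith
      _ = (1 + κ) * (Δ / γ) := by ring
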